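/- Let U ⊆ ℝ be a nonempty open interval, let K ⊆ ℝ be an infinite compact set, and let φ : U → ℝ be continuous. Then the linear span of { φ ∘ g restricted to K : g : ℝ → ℝ affine (g(t) = a·t + b), g(K) ⊆ U } is dense in C(K) (with the supremum norm) if and only if φ does not coincide on U with a polynomial. -/

import Mathlib

open Set

private lemma fwdDiff_iter_zero_fun (u : ℝ) (n : ℕ) :
    (fwdDiff u)^[n] (fun _ : ℝ => (0:ℝ)) = fun _ => 0 := by
  induction n with
  | zero => rfl
  | succ n ih =>
    rw [Function.iterate_succ_apply,
      show fwdDiff u (fun _ : ℝ => (0:ℝ)) = fun _ => 0 from funext fun x => sub_self 0, ih]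

private lemma hasDerivAt_fwdDiff_iter (u : ℝ) (f f' : ℝ → ℝ)
    (hf : ∀ x, HasDerivAt f (f' x) x) (n : ℕ) :
    ∀ x, HasDerivAt ((fwdDiff u)^[n] f) ((fwdDiff u)^[n] f' x) x := by
  induction n generalizing f f' with
  | zero => exact hf
  | succ n ih =>
    intro x
    rw [Function.iterate_succ_apply', Function.iterate_succ_apply']
    have h1 : HasDerivAt (fun y => (fwdDiff u)^[n] f (y + u)) ((fwdDiff u)^[n] f' (x + u)) x := by
      exact (HasDerivAt.comp x (ih f f' hf (x + u)) ((hasDerivAt_id x).add_const u)).congr_deriv (by simp)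
    exact h1.sub (ih f f' hf x)

private lemma exists_fwdDiff_iter_eq (f : ℝ → ℝ) (hf : ContDiff ℝ ((⊤:ℕ∞):WithTop ℕ∞) f) (n : ℕ) (u b : ℝ) :
    ∃ ξ : ℝ, |ξ - b| ≤ n * |u| ∧ (fwdDiff u)^[n] f b = u ^ n * iteratedDeriv n f ξ := by
  induction n generalizing f b with
  | zero => exact ⟨b, by simp, by simp⟩
  | succ n ih =>
    have hf' : ContDiff ℝ ((⊤:ℕ∞):WithTop ℕ∞) (deriv f) := (contDiff_infty_iff_deriv.mp hf).2
    have hder : ∀ x, HasDerivAt f (deriv f x) x :=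
      fun x => ((hf.differentiable (by simp)) x).hasDerivAt
    rcases eq_or_ne u 0 with rfl | hu
    · refine ⟨b, by simp, ?_⟩
      rw [Function.iterate_succ_apply,
        show fwdDiff (0:ℝ) f = fun _ => 0 from funext fun x => by simp [fwdDiff],
        fwdDiff_iter_zero_fun]
      simp
    · set g := (fwdDiff u)^[n] f with hg
      have hgd : ∀ x, HasDerivAt g ((fwdDiff u)^[n] (deriv f) x) x :=
        hasDerivAt_fwdDiff_iter u f (deriv f) hder n
      have key : ∃ c, |c - b| ≤ |u| ∧ g (b + u) - g b = u * (fwdDiff u)^[n] (deriv f) c := by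
        rcases lt_or_gt_of_ne hu with hneg | hpos
        · have hlt : b + u < b := by linarith
          obtain ⟨c, hc, hceq⟩ := exists_hasDerivAt_eq_slope g ((fwdDiff u)^[n] (deriv f)) hlt
            (fun x _ => (hgd x).continuousAt.continuousWithinAt) (fun x _ => hgd x)
          refine ⟨c, by rw [abs_sub_comm]; rw [abs_of_pos (by linarith [hc.1, hc.2] : (0:ℝ) < b - c), abs_of_neg (by linarith : u < 0)]; linarith [hc.1], ?_⟩
          rw [hceq, show b - (b+u) = -u by ring, div_neg, mul_neg, ← mul_div_assoc, mul_div_cancel_left₀ _ hu]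
          ring
        · have hlt : b < b + u := by linarith
          obtain ⟨c, hc, hceq⟩ := exists_hasDerivAt_eq_slope g ((fwdDiff u)^[n] (deriv f)) hlt
            (fun x _ => (hgd x).continuousAt.continuousWithinAt) (fun x _ => hgd x)
          refine ⟨c, by rw [abs_of_pos (by linarith [hc.1, hc.2] : (0:ℝ) < c - b), abs_of_pos hpos]; linarith [hc.2], ?_⟩
          rw [hceq, show b + u - b = u by ring, ← mul_div_assoc, mul_div_cancel_left₀ _ hu]
      obtain ⟨c, hcb, hcval⟩ := key
      obtain ⟨ξ, hξc, hξval⟩ := ih (deriv f) hf' c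
      refine ⟨ξ, ?_, ?_⟩
      · have h1 : |ξ - b| ≤ |ξ - c| + |c - b| := abs_sub_le _ _ _
        push_cast
        nlinarith [abs_nonneg u]
      · rw [Function.iterate_succ_apply',
          show fwdDiff u g b = g (b + u) - g b from rfl, hcval, hξval, ← iteratedDeriv_succ']
        ring

open Set Polynomial

private lemma antideriv_poly (p : Polynomial ℝ) :
    ∃ q : Polynomial ℝ, q.natDegree ≤ p.natDegree + 1 ∧ q.derivative = p := by
  refine ⟨p.sum fun i a => C (a / (i+1)) * X^(i+1), ?_, ?_⟩
  · rw [Polynomial.sum]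
    refine natDegree_sum_le_of_forall_le _ _ (fun i hi => ?_)
    exact (natDegree_C_mul_le _ _).trans (by simpa using Nat.succ_le_succ (le_natDegree_of_mem_supp i hi))
  · rw [Polynomial.sum, map_sum]
    conv_rhs => rw [← sum_C_mul_X_pow_eq p]
    rw [Polynomial.sum]
    refine Finset.sum_congr rfl (fun i hi => ?_)
    rw [derivative_C_mul_X_pow]
    simp only [Nat.add_sub_cancel]
    congr 1
    rw [div_mul_eq_mul_div, mul_div_assoc]
    push_cast
    rw [div_self (by positivity), mul_one]

private lemma poly_of_iteratedDeriv_zero :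
    ∀ (n : ℕ) (f : ℝ → ℝ), ContDiff ℝ ((⊤:ℕ∞):WithTop ℕ∞) f → ∀ (c₁ d₁ : ℝ),
    (∀ x ∈ Ioo c₁ d₁, iteratedDeriv n f x = 0) →
    ∃ p : Polynomial ℝ, p.natDegree ≤ n ∧ ∀ x ∈ Ioo c₁ d₁, f x = p.eval x := by
  intro n
  induction n with
  | zero =>
    intro f _ c₁ d₁ h
    exact ⟨0, le_rfl, fun x hx => by simpa using h x hx⟩
  | succ n ih =>
    intro f hf c₁ d₁ h
    have hf' : ContDiff ℝ ((⊤:ℕ∞):WithTop ℕ∞) (deriv f) := (contDiff_infty_iff_deriv.mp hf).2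
    obtain ⟨p, hpdeg, hp⟩ := ih (deriv f) hf' c₁ d₁ (fun x hx => by
      rw [← iteratedDeriv_succ']; exact h x hx)
    obtain ⟨q, hqdeg, hq⟩ := antideriv_poly p
    by_cases hcd : c₁ < d₁
    · have hder : ∀ x, HasDerivAt f (deriv f x) x :=
        fun x => ((hf.differentiable (by simp)) x).hasDerivAt
      set x₀ := (c₁ + d₁)/2 with hx₀def
      have hx₀ : x₀ ∈ Ioo c₁ d₁ := ⟨by linarith, by linarith⟩
      have hgder : ∀ x ∈ Ioo c₁ d₁, HasDerivAt (fun y => f y - q.eval y) 0 x := by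
        intro x hx
        have h1 := (hder x).sub (q.hasDerivAt x)
        have h2 : deriv f x - (q.derivative).eval x = 0 := by
          rw [hq, hp x hx]; ring
        rwa [h2] at h1
      have key : ∀ x ∈ Ioo c₁ d₁, f x - q.eval x = f x₀ - q.eval x₀ := by
        intro x hx
        refine Convex.is_const_of_fderivWithin_eq_zero (convex_Ioo c₁ d₁)
          (fun y hy => ((hgder y hy).differentiableAt.differentiableWithinAt)) (fun y hy => ?_) hx hx₀
        rw [fderivWithin_of_isOpen isOpen_Ioo hy, (hgder y hy).hasFDerivAt.fderiv]
        ext; simp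
      refine ⟨q + C (f x₀ - q.eval x₀), ?_, fun x hx => ?_⟩
      · refine (natDegree_add_le _ _).trans (max_le (hqdeg.trans (by omega)) ?_)
        simp
      · have := key x hx
        simp only [eval_add, eval_C]
        linarith
    · exact ⟨0, by simp, fun x hx => absurd hx (by rw [Set.Ioo_eq_empty hcd]; exact notMem_empty x)⟩

open Set

private lemma exists_functional {E : Type*} [NormedAddCommGroup E] [NormedSpace ℝ E]
    (W : Submodule ℝ E) (hW : ¬ Dense (W : Set E)) :
    ∃ L : E →L[ℝ] ℝ, L ≠ 0 ∧ ∀ w ∈ W, L w = 0 := by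
  have hX : W.topologicalClosure ≠ ⊤ := fun h =>
    hW (Submodule.dense_iff_topologicalClosure_eq_top.mpr h)
  obtain ⟨v, hv⟩ : ∃ v : E, v ∉ W.topologicalClosure := by
    by_contra h
    push_neg at h
    exact hX (Submodule.eq_top_iff'.mpr h)
  obtain ⟨l, s, hls, hsv⟩ := geometric_hahn_banach_closed_point
    (W.topologicalClosure.convex)
    W.isClosed_topologicalClosure hv
  have hzero : ∀ w ∈ W.topologicalClosure, l w = 0 := by
    intro w hw
    by_contra hlw
    have : ∀ c : ℝ, l (c • w) < s := fun c => hls _ (Submodule.smul_mem _ c hw)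
    have h2 : ∀ c : ℝ, c * l w < s := fun c => by simpa using this c
    rcases lt_or_gt_of_ne hlw with h | h
    · have := h2 ((s+1)/(l w))
      rw [div_mul_cancel₀ _ (ne_of_lt h)] at this
      linarith
    · have := h2 ((s+1)/(l w))
      rw [div_mul_cancel₀ _ (ne_of_gt h)] at this
      linarith
  refine ⟨l, ?_, fun w hw => hzero w (Submodule.le_topologicalClosure W hw)⟩
  intro h0
  have h1 : l v = 0 := by rw [h0]; rfl
  have h2 : l 0 < s := hls 0 (Submodule.zero_mem _)
  rw [map_zero] at h2
  rw [h1] at hsv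
  linarith

open Set Polynomial

private noncomputable def monoK (K : Set ℝ) (n : ℕ) : C(K, ℝ) :=
  ⟨fun t => (t : ℝ) ^ n, (continuous_subtype_val.pow n)⟩

private lemma dense_implies_not_poly (U : Set ℝ) (K : Set ℝ) (hKcompact : IsCompact K)
    (hKinf : K.Infinite) (φ : ℝ → ℝ)
    (hd : Dense (↑(Submodule.span ℝ
        {h : C(K, ℝ) | ∃ a b : ℝ, (∀ t ∈ K, a * t + b ∈ U) ∧
          ∀ x : K, h x = φ (a * (x : ℝ) + b)}) : Set C(K, ℝ)))
    (p : Polynomial ℝ) (hp : ∀ t ∈ U, φ t = p.eval t) : False := by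
  haveI : CompactSpace K := isCompact_iff_compactSpace.mp hKcompact
  set S := {h : C(K, ℝ) | ∃ a b : ℝ, (∀ t ∈ K, a * t + b ∈ U) ∧
          ∀ x : K, h x = φ (a * (x : ℝ) + b)} with hS
  set N := p.natDegree with hN
  set V : Submodule ℝ C(K, ℝ) := Submodule.span ℝ (Set.range fun i : Fin (N+1) => monoK K i) with hV
  haveI : FiniteDimensional ℝ ↥V := FiniteDimensional.span_of_finite ℝ (Set.finite_range _)
  have hSV : S ⊆ (V : Set C(K, ℝ)) := by
    rintro h ⟨a, b, hmem, heq⟩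
    have key : h = ∑ i ∈ Finset.range (N+1), (p.comp (C a * X + C b)).coeff i • monoK K i := by
      ext t
      have h1 : h t = (p.comp (C a * X + C b)).eval (t : ℝ) := by
        rw [heq t, hp _ (hmem t t.2), eval_comp]
        simp
      have hdeg : (p.comp (C a * X + C b)).natDegree < N + 1 := by
        have := natDegree_comp (p := p) (q := C a * X + C b)
        have h2 : (C a * X + C b).natDegree ≤ 1 := natDegree_linear_le
        calc (p.comp (C a * X + C b)).natDegree = N * (C a * X + C b).natDegree := this
        _ ≤ N * 1 := Nat.mul_le_mul_left _ h2
        _ < N + 1 := by omega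
      rw [h1, eval_eq_sum_range' hdeg]
      simp [monoK]
    rw [key]
    refine Submodule.sum_mem _ (fun i hi => Submodule.smul_mem _ _ (Submodule.subset_span ?_))
    exact ⟨⟨i, Finset.mem_range.mp hi⟩, rfl⟩
  have hVtop : V = ⊤ := by
    have hc : closure (↑(Submodule.span ℝ S) : Set C(K, ℝ)) = Set.univ := hd.closure_eq
    have h1 : Submodule.span ℝ S ≤ V := Submodule.span_le.mpr hSV
    have h2 : closure (↑(Submodule.span ℝ S) : Set C(K, ℝ)) ⊆ (V : Set C(K,ℝ)) :=
      closure_minimal h1 V.closed_of_finiteDimensional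
    rw [hc] at h2
    exact Submodule.eq_top_iff'.mpr (fun x => h2 (mem_univ x))
  haveI : FiniteDimensional ℝ ↥(⊤ : Submodule ℝ C(K,ℝ)) := hVtop ▸ ‹FiniteDimensional ℝ ↥V›
  haveI : FiniteDimensional ℝ C(K, ℝ) :=
    (Submodule.topEquiv (R := ℝ) (M := C(K,ℝ))).finiteDimensional
  -- get N+2 distinct points of K
  obtain ⟨T, hTK, hTcard⟩ := hKinf.exists_subset_card_eq (N+2)
  -- Lagrange basis functions restricted to K are linearly independent
  classical
  have hInj : Set.InjOn id (T : Set ℝ) := Function.injective_id.injOn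
  set g : T → C(K, ℝ) := fun i => ⟨fun x => (Lagrange.basis T id i).eval (x:ℝ),
    (Polynomial.continuous _).comp continuous_subtype_val⟩ with hg
  have hli : LinearIndependent ℝ g := by
    rw [Fintype.linearIndependent_iff]
    intro c hc i
    have := congrFun (congrArg (fun (q : C(K,ℝ)) => (q : K → ℝ)) hc) ⟨(i : ℝ), hTK i.2⟩
    simp only [ContinuousMap.coe_sum, Finset.sum_apply, ContinuousMap.coe_smul, Pi.smul_apply] at this
    rw [show ((0:C(K,ℝ)) : K → ℝ) ⟨(i:ℝ), hTK i.2⟩ = 0 from rfl] at this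
    have heval : ∀ j : T, c j • (g j) ⟨(i : ℝ), hTK i.2⟩ = if j = i then c j else 0 := by
      intro j
      by_cases hji : j = i
      · subst hji
        have h5 : eval ((j:ℝ)) (Lagrange.basis T id (j:ℝ)) = 1 := by
          simpa using Lagrange.eval_basis_self hInj j.2
        simp [hg, h5]
      · have h5 := Lagrange.eval_basis_of_ne (v := (id : ℝ → ℝ))
            (show (j:ℝ) ≠ (i:ℝ) from fun h => hji (Subtype.ext h)) i.2
        simp only [hg, ContinuousMap.coe_mk, smul_eq_mul, if_neg hji]
        exact mul_eq_zero_of_right _ (by simpa using h5)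
    rw [Finset.sum_congr rfl (fun j _ => heval j)] at this
    simpa using this
  have hcard : N + 2 ≤ Module.finrank ℝ C(K, ℝ) := by
    have := hli.fintype_card_le_finrank
    simpa [hTcard] using this
  have hrank : Module.finrank ℝ C(K, ℝ) ≤ N + 1 := by
    have h1 : Module.finrank ℝ ↥V ≤ N + 1 := by
      have := finrank_span_le_card (R := ℝ) (Set.range fun i : Fin (N+1) => monoK K i)
      refine this.trans ?_
      have : (Set.range fun i : Fin (N+1) => monoK K i).toFinset.card ≤ Fintype.card (Fin (N+1)) := by
        rw [Set.toFinset_range]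
        exact (Finset.card_image_le).trans (by simp)
      simpa using this
    rw [← finrank_top ℝ C(K,ℝ), ← hVtop]
    exact h1
  omega

open MeasureTheory

-- Claim Z in isolation
private lemma claimZ (U : Set ℝ) (K : Set ℝ) (hKcompact : IsCompact K) (φ : ℝ → ℝ)
    (L : C(K,ℝ) →L[ℝ] ℝ)
    (hLS : ∀ h : C(K,ℝ), (∃ a b : ℝ, (∀ t ∈ K, a * t + b ∈ U) ∧
          ∀ x : K, h x = φ (a * (x : ℝ) + b)) → L h = 0)
    (M : ℝ) (hM1 : 1 ≤ M) (hM : ∀ t ∈ K, |t| ≤ M)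
    (c₁ d₁ η : ℝ) (hcd : c₁ < d₁) (hη : 0 < η)
    (hsubU : ∀ y ∈ Icc (c₁ - 2*η) (d₁ + 2*η), y ∈ U)
    (ψ : ℝ → ℝ) (hψc : Continuous ψ)
    (hψφ : ∀ y ∈ Icc (c₁ - 2*η) (d₁ + 2*η), ψ y = φ y)
    (ρ : ContDiffBump (0:ℝ)) (hρ : ρ.rOut ≤ η)
    (a b : ℝ) (ha : |a| ≤ η/M) (hb : b ∈ Icc c₁ d₁)
    (cont : Continuous fun t : K => (convolution (ρ.normed volume) ψ
      (ContinuousLinearMap.lsmul ℝ ℝ) volume) (a * t + b)) :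
    L ⟨fun t : K => (convolution (ρ.normed volume) ψ
      (ContinuousLinearMap.lsmul ℝ ℝ) volume) (a * t + b), cont⟩ = 0 := by
  haveI : CompactSpace K := isCompact_iff_compactSpace.mp hKcompact
  have harg : ∀ (s : ℝ), |s| ≤ η → ∀ t : K, a * (t:ℝ) + b - s ∈ Icc (c₁ - 2*η) (d₁ + 2*η) := by
    intro s hs t
    have hat : |a * (t:ℝ)| ≤ η := by
      rw [abs_mul]
      calc |a| * |(t:ℝ)| ≤ (η/M) * M :=
        mul_le_mul ha (hM t t.2) (abs_nonneg _) (by positivity)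
      _ = η := by field_simp
    have h1 := abs_le.mp hat
    have h2 := abs_le.mp hs
    constructor <;> [linarith [hb.1, h1.1, h2.2] ; linarith [hb.2, h1.2, h2.1]]
  set Θ : C(ℝ × K, ℝ) := ⟨fun q => ψ (a * (q.2:ℝ) + b - q.1),
    hψc.comp (((continuous_const.mul (continuous_subtype_val.comp continuous_snd)).add
      continuous_const).sub continuous_fst)⟩ with hΘ
  set Ψ : ℝ → C(K, ℝ) := fun s => ρ.normed volume s • (ContinuousMap.curry Θ) s with hΨ
  have hΨcont : Continuous Ψ := (ρ.continuous_normed).smul (ContinuousMap.curry Θ).continuous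
  have hΨsupp : HasCompactSupport Ψ := by
    refine HasCompactSupport.smul_right (f := fun s => ρ.normed volume s) ?_
    exact ρ.hasCompactSupport_normed
  have hint : Integrable Ψ volume := hΨcont.integrable_of_hasCompactSupport hΨsupp
  have heval : (∫ s, Ψ s) = ⟨fun t : K => (convolution (ρ.normed volume) ψ
      (ContinuousLinearMap.lsmul ℝ ℝ) volume) (a * t + b), cont⟩ := by
    ext t
    rw [ContinuousMap.integral_apply hint]
    simp only [hΨ, ContinuousMap.smul_apply, ContinuousMap.curry_apply, hΘ, ContinuousMap.coe_mk,
      smul_eq_mul]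
    rw [MeasureTheory.convolution_def]
    congr 1
  have hz : ∀ s, L (Ψ s) = 0 := by
    intro s
    show L (ρ.normed volume s • (ContinuousMap.curry Θ) s) = 0
    rw [L.map_smul, smul_eq_mul]
    by_cases h0 : ρ.normed volume s = 0
    · rw [h0, zero_mul]
    · have hs : |s| < ρ.rOut := by
        have := Function.mem_support.mpr h0
        rw [ρ.support_normed_eq] at this
        simpa [Real.dist_eq] using this
      have hsη : |s| ≤ η := le_of_lt (lt_of_lt_of_le hs hρ)
      have : L ((ContinuousMap.curry Θ) s) = 0 := by
        refine hLS _ ⟨a, b - s, fun t ht => ?_, fun x => ?_⟩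
        · have := harg s hsη ⟨t, ht⟩
          exact hsubU _ (by simpa [sub_eq_add_neg, add_assoc] using this)
        · simp only [ContinuousMap.curry_apply, hΘ, ContinuousMap.coe_mk]
          rw [hψφ _ (harg s hsη x)]
          ring_nf
      rw [this, mul_zero]
  rw [← heval, ← ContinuousLinearMap.integral_comp_comm L hint]
  simp only [hz]
  exact integral_zero _ _

private lemma conv_poly (U : Set ℝ) (K : Set ℝ) (hKcompact : IsCompact K) (φ : ℝ → ℝ)
    (L : C(K,ℝ) →L[ℝ] ℝ)
    (hLS : ∀ h : C(K,ℝ), (∃ a b : ℝ, (∀ t ∈ K, a * t + b ∈ U) ∧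
          ∀ x : K, h x = φ (a * (x : ℝ) + b)) → L h = 0)
    (n₀ : ℕ) (hn₀ : L (monoK K n₀) ≠ 0)
    (M : ℝ) (hM1 : 1 ≤ M) (hM : ∀ t ∈ K, |t| ≤ M)
    (c₁ d₁ η : ℝ) (hcd : c₁ < d₁) (hη : 0 < η)
    (hsubU : ∀ y ∈ Icc (c₁ - 2*η) (d₁ + 2*η), y ∈ U)
    (ψ : ℝ → ℝ) (hψc : Continuous ψ)
    (hψφ : ∀ y ∈ Icc (c₁ - 2*η) (d₁ + 2*η), ψ y = φ y)
    (ρ : ContDiffBump (0:ℝ)) (hρ : ρ.rOut ≤ η) :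
    ∃ p : Polynomial ℝ, p.natDegree ≤ n₀ ∧ ∀ x ∈ Ioo c₁ d₁,
      (convolution (ρ.normed volume) ψ (ContinuousLinearMap.lsmul ℝ ℝ) volume) x = p.eval x := by
  haveI : CompactSpace K := isCompact_iff_compactSpace.mp hKcompact
  set fm : ℝ → ℝ := convolution (ρ.normed volume) ψ (ContinuousLinearMap.lsmul ℝ ℝ) volume with hfm_def
  have hfm : ContDiff ℝ ((⊤:ℕ∞):WithTop ℕ∞) fm :=
    HasCompactSupport.contDiff_convolution_left _ ρ.hasCompactSupport_normed
      ρ.contDiff_normed hψc.locallyIntegrable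
  have cont : ∀ a b : ℝ, Continuous fun t : K => fm (a * t + b) := fun a b =>
    hfm.continuous.comp (((continuous_const.mul continuous_subtype_val).add continuous_const))
  set Gm : ℝ → ℝ → C(K, ℝ) := fun a b => ⟨fun t : K => fm (a * t + b), cont a b⟩ with hGm
  have hZ : ∀ a b : ℝ, |a| ≤ η/M → b ∈ Icc c₁ d₁ → L (Gm a b) = 0 := by
    intro a b ha hb
    exact claimZ U K hKcompact φ L hLS M hM1 hM c₁ d₁ η hcd hη hsubU ψ hψc hψφ ρ hρ
      a b ha hb (cont a b)
  -- Claim D : the n₀-th derivative of fm vanishes on Icc c₁ d₁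
  have hD : ∀ b ∈ Icc c₁ d₁, iteratedDeriv n₀ fm b = 0 := by
    intro b hb
    set gn : ℝ → ℝ := iteratedDeriv n₀ fm with hgn
    set w : C(K, ℝ) := gn b • monoK K n₀ with hw
    have hbound : ∀ e : ℝ, 0 < e → |L w| ≤ (‖L‖ * M^n₀) * e := by
      intro e he
      have hgnc : Continuous gn := hfm.continuous_iteratedDeriv n₀ (by exact_mod_cast le_top)
      obtain ⟨δ₁, hδ₁pos, hδ₁⟩ := Metric.continuousAt_iff.mp (hgnc.continuousAt (x := b)) e he
      set h : ℝ := min (δ₁ / (2*(n₀*M+1))) (η/(M*(n₀+1))) with hh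
      have hhpos : 0 < h := by
        apply lt_min <;> positivity
      have hhne : h ≠ 0 := ne_of_gt hhpos
      set v : C(K,ℝ) := (h^n₀)⁻¹ • ∑ j ∈ Finset.range (n₀+1),
        (((-1:ℝ))^(n₀-j) * (n₀.choose j)) • Gm (j*h) b with hv
      have hLv : L v = 0 := by
        rw [hv, L.map_smul, map_sum]
        have : ∀ j ∈ Finset.range (n₀+1), L ((((-1:ℝ))^(n₀-j) * (n₀.choose j)) • Gm (j*h) b) = 0 := by
          intro j hj
          rw [L.map_smul]
          have hjh : |(j:ℝ)*h| ≤ η/M := by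
            rw [abs_mul, Nat.abs_cast, abs_of_pos hhpos]
            have hj1 : (j:ℝ) ≤ n₀ := by exact_mod_cast Nat.lt_succ_iff.mp (Finset.mem_range.mp hj)
            have h2 : h ≤ η/(M*(n₀+1)) := min_le_right _ _
            have h3 : (j:ℝ) * h ≤ (n₀+1) * (η/(M*(n₀+1))) := by
              apply mul_le_mul (by linarith) h2 (le_of_lt hhpos) (by positivity)
            calc (j:ℝ) * h ≤ (n₀+1) * (η/(M*(n₀+1))) := h3
            _ = η/M := by field_simp
          rw [hZ _ _ hjh hb, smul_zero]
        rw [Finset.sum_congr rfl this]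
        simp
      have hveq : ∀ t : K, v t = (h^n₀)⁻¹ * (fwdDiff (h * t))^[n₀] fm b := by
        intro t
        rw [fwdDiff_iter_eq_sum_shift]
        rw [hv]
        simp only [ContinuousMap.smul_apply, ContinuousMap.coe_sum, Finset.sum_apply,
          smul_eq_mul, ContinuousMap.coe_smul, Pi.smul_apply]
        congr 1
        refine Finset.sum_congr rfl (fun j hj => ?_)
        have : (Gm (j*h) b) t = fm ((j:ℝ)*h*(t:ℝ) + b) := rfl
        rw [this]
        rw [zsmul_eq_mul]
        push_cast
        ring_nf
      have hdist : ∀ t : K, |v t - w t| ≤ M^n₀ * e := by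
        intro t
        obtain ⟨ξ, hξ, hval⟩ := exists_fwdDiff_iter_eq fm hfm n₀ (h * t) b
        have hvt : v t = (t:ℝ)^n₀ * gn ξ := by
          rw [hveq t, hval, mul_pow, ← mul_assoc, ← mul_assoc,
            inv_mul_cancel₀ (pow_ne_zero n₀ hhne), one_mul]
        have hwt : w t = gn b * (t:ℝ)^n₀ := rfl
        have htM : |(t:ℝ)| ≤ M := hM t t.2
        have hξb : |ξ - b| < δ₁ := by
          have h4 : h ≤ δ₁/(2*(n₀*M+1)) := min_le_left _ _
          have h5 : |h * (t:ℝ)| ≤ h * M := by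
            rw [abs_mul, abs_of_pos hhpos]
            exact mul_le_mul_of_nonneg_left htM (le_of_lt hhpos)
          have h6 : |ξ - b| ≤ n₀ * (h * M) := by
            calc |ξ - b| ≤ n₀ * |h * (t:ℝ)| := hξ
            _ ≤ n₀ * (h * M) := mul_le_mul_of_nonneg_left h5 (by positivity)
          have hnM : (0:ℝ) ≤ (n₀:ℝ) * M := by positivity
          have h4' : h * (2*((n₀:ℝ)*M+1)) ≤ δ₁ := by
            rw [← le_div_iff₀ (by positivity)]
            exact h4
          have h7 : (n₀:ℝ) * (h * M) < δ₁ := by nlinarith [mul_nonneg hnM hhpos.le, hhpos]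
          linarith
        have hgne : |gn ξ - gn b| < e := by
          have := hδ₁ (x := ξ) (by rwa [Real.dist_eq])
          rwa [Real.dist_eq] at this
        rw [hvt, hwt, show (t:ℝ)^n₀ * gn ξ - gn b * (t:ℝ)^n₀ = (t:ℝ)^n₀ * (gn ξ - gn b) by ring,
          abs_mul, abs_pow]
        exact mul_le_mul (pow_le_pow_left₀ (abs_nonneg _) htM n₀) (le_of_lt hgne)
          (abs_nonneg _) (by positivity)
      have hnorm : ‖w - v‖ ≤ M^n₀ * e := by
        rw [← dist_eq_norm, ContinuousMap.dist_le (by positivity)]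
        exact fun t => by rw [Real.dist_eq, abs_sub_comm]; exact hdist t
      calc |L w| = |L (w - v)| := by rw [map_sub, hLv, sub_zero]
      _ = ‖L (w - v)‖ := (Real.norm_eq_abs _).symm
      _ ≤ ‖L‖ * ‖w - v‖ := L.le_opNorm _
      _ ≤ ‖L‖ * (M^n₀ * e) := mul_le_mul_of_nonneg_left hnorm (norm_nonneg L)
      _ = (‖L‖ * M^n₀) * e := by ring
    have hLw : L w = 0 := by
      by_contra hne
      have habs : 0 < |L w| := abs_pos.mpr hne
      set C := ‖L‖ * M^n₀ with hC_def
      have hC : 0 ≤ C := by positivity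
      have h2C : 0 < 2*C+1 := by positivity
      have hb1 := hbound (|L w| / (2*C+1)) (by positivity)
      have h3 : C * (|L w| / (2*C+1)) < |L w| := by
        rw [← mul_div_assoc, div_lt_iff₀ h2C]
        nlinarith
      linarith
    have hEq : L w = gn b * L (monoK K n₀) := by rw [hw, L.map_smul, smul_eq_mul]
    rw [hEq] at hLw
    rcases mul_eq_zero.mp hLw with h | h
    · exact h
    · exact absurd h hn₀
  have hvanish : ∀ x ∈ Ioo c₁ d₁, iteratedDeriv n₀ fm x = 0 :=
    fun x hx => hD x (Ioo_subset_Icc_self hx)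
  exact poly_of_iteratedDeriv_zero n₀ fm hfm c₁ d₁ hvanish

private lemma exists_mono_ne (K : Set ℝ) (hKcompact : IsCompact K)
    (L : C(K,ℝ) →L[ℝ] ℝ) (hL : L ≠ 0) : ∃ n : ℕ, L (monoK K n) ≠ 0 := by
  haveI : CompactSpace K := isCompact_iff_compactSpace.mp hKcompact
  by_contra hall
  push_neg at hall
  have hA : (polynomialFunctions K).topologicalClosure = ⊤ :=
    ContinuousMap.subalgebra_topologicalClosure_eq_top_of_separatesPoints _
      (polynomialFunctions_separatesPoints K)
  have hdense : Dense (polynomialFunctions K : Set C(K,ℝ)) := by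
    rw [dense_iff_closure_eq]
    have := congrArg (fun (A : Subalgebra ℝ C(K,ℝ)) => (A : Set C(K,ℝ))) hA
    simpa [Subalgebra.topologicalClosure_coe] using this
  have hvanish : ∀ g ∈ (polynomialFunctions K : Set C(K,ℝ)), L g = 0 := by
    intro g hg
    rw [polynomialFunctions_coe] at hg
    obtain ⟨q, rfl⟩ := hg
    have hrepr : (Polynomial.toContinuousMapOnAlgHom K q) =
        ∑ i ∈ Finset.range (q.natDegree + 1), q.coeff i • monoK K i := by
      ext t
      simp only [Polynomial.toContinuousMapOnAlgHom_apply, Polynomial.toContinuousMapOn_apply,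
        Polynomial.toContinuousMap_apply, ContinuousMap.coe_sum, Finset.sum_apply,
        ContinuousMap.coe_smul, Pi.smul_apply, smul_eq_mul]
      exact q.eval_eq_sum_range (t : ℝ)
    rw [hrepr, map_sum]
    refine Finset.sum_eq_zero (fun i _ => ?_)
    rw [L.map_smul, hall i, smul_zero]
  apply hL
  have hfun : (L : C(K,ℝ) → ℝ) = ((0 : C(K,ℝ) →L[ℝ] ℝ) : C(K,ℝ) → ℝ) :=
    Continuous.ext_on hdense L.continuous continuous_zero hvanish
  exact ContinuousLinearMap.ext fun x => congrFun hfun x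

private lemma local_poly (U : Set ℝ) (hUopen : IsOpen U) (K : Set ℝ) (hKcompact : IsCompact K)
    (φ : ℝ → ℝ) (hφ : ContinuousOn φ U)
    (L : C(K, ℝ) →L[ℝ] ℝ)
    (hLS : ∀ h : C(K,ℝ), (∃ a b : ℝ, (∀ t ∈ K, a * t + b ∈ U) ∧
          ∀ x : K, h x = φ (a * (x : ℝ) + b)) → L h = 0)
    (n₀ : ℕ) (hn₀ : L (monoK K n₀) ≠ 0)
    (M : ℝ) (hM1 : 1 ≤ M) (hM : ∀ t ∈ K, |t| ≤ M)
    (c₁ d₁ : ℝ) (hcd : c₁ < d₁) (hIccU : Icc c₁ d₁ ⊆ U) :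
    ∃ p : Polynomial ℝ, ∀ x ∈ Ioo c₁ d₁, φ x = p.eval x := by
  haveI : CompactSpace K := isCompact_iff_compactSpace.mp hKcompact
  classical
  obtain ⟨δ, hδpos, hδ⟩ := (isCompact_Icc (a := c₁) (b := d₁)).exists_thickening_subset_open hUopen hIccU
  set η := δ/5 with hη_def
  have hηpos : 0 < η := by positivity
  have hsub : ∀ y ∈ Icc (c₁ - 4*η) (d₁ + 4*η), y ∈ U := by
    intro x hx
    apply hδ
    rw [Metric.mem_thickening_iff]
    refine ⟨max c₁ (min x d₁), ⟨le_max_left _ _, max_le (le_of_lt hcd) (min_le_right _ _)⟩, ?_⟩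
    rw [Real.dist_eq]
    rcases le_total x c₁ with h1 | h1
    · rw [min_eq_left (le_trans h1 (le_of_lt hcd)), max_eq_left h1]
      rw [abs_of_nonpos (by linarith)]
      have := hx.1
      linarith
    · rcases le_total x d₁ with h2 | h2
      · rw [min_eq_left h2, max_eq_right h1]
        simpa using hδpos
      · rw [min_eq_right h2, max_eq_right (le_of_lt hcd)]
        rw [abs_of_nonneg (by linarith)]
        have := hx.2
        linarith
  set c' := c₁ - 4*η with hc'
  set d' := d₁ + 4*η with hd'
  have hc'd' : c' ≤ d' := by rw [hc', hd']; linarith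
  set clamp : ℝ → ℝ := fun x => max c' (min x d') with hclamp_def
  have hclamp_cont : Continuous clamp := continuous_const.max (continuous_id.min continuous_const)
  have hclamp_mem : ∀ x, clamp x ∈ Icc c' d' :=
    fun x => ⟨le_max_left _ _, max_le hc'd' (min_le_right _ _)⟩
  set ψ : ℝ → ℝ := fun x => φ (clamp x) with hψ_def
  have hψc : Continuous ψ :=
    ContinuousOn.comp_continuous (hφ.mono (fun y hy => hsub y hy)) hclamp_cont
      (fun x => hclamp_mem x)
  have hψφ' : ∀ y ∈ Icc c' d', ψ y = φ y := by
    intro y hy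
    have : clamp y = y := by
      rw [hclamp_def]
      simp only
      rw [min_eq_left hy.2, max_eq_right hy.1]
    rw [hψ_def]
    simp only
    rw [this]
  have hψφ : ∀ y ∈ Icc (c₁ - 2*η) (d₁ + 2*η), ψ y = φ y := by
    intro y hy
    exact hψφ' y ⟨by rw [hc']; linarith [hy.1], by rw [hd']; linarith [hy.2]⟩
  have hsubU : ∀ y ∈ Icc (c₁ - 2*η) (d₁ + 2*η), y ∈ U := by
    intro y hy
    exact hsub y ⟨by linarith [hy.1], by linarith [hy.2]⟩
  -- bump family
  set ε : ℕ → ℝ := fun k => η / (k+1) with hε_def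
  have hεpos : ∀ k, 0 < ε k := fun k => by positivity
  have hεle : ∀ k, ε k ≤ η := by
    intro k
    rw [hε_def]
    rw [div_le_iff₀ (by positivity)]
    nlinarith [Nat.cast_nonneg (α := ℝ) k, hηpos]
  set ρ : ℕ → ContDiffBump (0:ℝ) := fun k =>
    ⟨ε k / 2, ε k, half_pos (hεpos k), half_lt_self (hεpos k)⟩ with hρ_def
  set fk : ℕ → ℝ → ℝ := fun k =>
    convolution ((ρ k).normed volume) ψ (ContinuousLinearMap.lsmul ℝ ℝ) volume with hfk_def
  have hconv : ∀ k, ∃ p : Polynomial ℝ, p.natDegree ≤ n₀ ∧ ∀ x ∈ Ioo c₁ d₁, fk k x = p.eval x :=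
    fun k => conv_poly U K hKcompact φ L hLS n₀ hn₀ M hM1 hM c₁ d₁ η hcd hηpos hsubU
      ψ hψc hψφ (ρ k) (hεle k)
  -- pointwise convergence of the mollification
  have hlim : ∀ x : ℝ, Filter.Tendsto (fun k => fk k x) Filter.atTop (nhds (ψ x)) := by
    intro x
    have hrOut : Filter.Tendsto (fun k : ℕ => (ρ k).rOut) Filter.atTop (nhds 0) := by
      have h1 : Filter.Tendsto (fun k : ℕ => η / (k:ℝ)) Filter.atTop (nhds 0) :=
        tendsto_const_div_atTop_nhds_zero_nat η
      have h2 := h1.comp (Filter.tendsto_add_atTop_nat 1)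
      convert h2 using 2 with k
      show ε k = η / ((k+1:ℕ):ℝ)
      rw [hε_def]
      norm_cast
    exact ContDiffBump.convolution_tendsto_right hrOut
      (Filter.Eventually.of_forall (fun _ => hψc.aestronglyMeasurable))
      ((hψc.tendsto x).comp Filter.tendsto_snd) tendsto_const_nhds
  -- Lagrange nodes
  set v : ℕ → ℝ := fun i => c₁ + (d₁ - c₁) * (i+1) / (n₀+2) with hv_def
  set s : Finset ℕ := Finset.range (n₀+1) with hs_def
  have hvmem : ∀ i ∈ s, v i ∈ Ioo c₁ d₁ := by
    intro i hi
    have hi' : (i:ℝ) ≤ n₀ := by exact_mod_cast Nat.lt_succ_iff.mp (Finset.mem_range.mp hi)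
    constructor
    · rw [hv_def]; simp only
      have : 0 < (d₁ - c₁) * ((i:ℝ)+1) / ((n₀:ℝ)+2) :=
        div_pos (mul_pos (sub_pos.mpr hcd) (by positivity)) (by positivity)
      linarith
    · rw [hv_def]; simp only
      have : (d₁ - c₁) * ((i:ℝ)+1) / ((n₀:ℝ)+2) < d₁ - c₁ := by
        rw [div_lt_iff₀ (by positivity)]
        nlinarith [sub_pos.mpr hcd]
      linarith
  have hvinj : Set.InjOn v s := by
    intro i _ j _ hij
    rw [hv_def] at hij
    simp only at hij
    have hd : d₁ - c₁ ≠ 0 := ne_of_gt (sub_pos.mpr hcd)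
    field_simp at hij
    have h3 : (d₁ - c₁) * ((i:ℝ) - j) = 0 := by linarith
    rcases mul_eq_zero.mp h3 with h | h
    · exact absurd h hd
    · exact_mod_cast sub_eq_zero.mp h
  have hcards : s.card = n₀ + 1 := Finset.card_range _
  -- for each k, fk k = interpolation of its nodal values on Ioo
  have hkey : ∀ k, ∀ x ∈ Ioo c₁ d₁,
      fk k x = ∑ i ∈ s, fk k (v i) * (Lagrange.basis s v i).eval x := by
    intro k x hx
    obtain ⟨p, hpdeg, hp⟩ := hconv k
    have hdeg : p.degree < s.card := by
      rw [hcards]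
      calc p.degree ≤ (p.natDegree : WithBot ℕ) := Polynomial.degree_le_natDegree
      _ < ((n₀ + 1 : ℕ) : WithBot ℕ) := by exact_mod_cast Nat.lt_succ_of_le hpdeg
    have hinterp := Lagrange.eq_interpolate hvinj hdeg
    have : p.eval x = ∑ i ∈ s, p.eval (v i) * (Lagrange.basis s v i).eval x := by
      conv_lhs => rw [hinterp]
      rw [Lagrange.interpolate_apply]
      rw [Polynomial.eval_finset_sum]
      exact Finset.sum_congr rfl (fun i _ => by rw [Polynomial.eval_mul, Polynomial.eval_C])
    rw [hp x hx, this]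
    exact Finset.sum_congr rfl (fun i hi => by rw [hp (v i) (hvmem i hi)])
  -- pass to the limit
  set p : Polynomial ℝ := ∑ i ∈ s, Polynomial.C (ψ (v i)) * Lagrange.basis s v i with hp_def
  refine ⟨p, fun x hx => ?_⟩
  have h1 : Filter.Tendsto (fun k => fk k x) Filter.atTop (nhds (ψ x)) := hlim x
  have h2 : Filter.Tendsto (fun k => fk k x) Filter.atTop (nhds (p.eval x)) := by
    have : ∀ k, fk k x = ∑ i ∈ s, fk k (v i) * (Lagrange.basis s v i).eval x :=
      fun k => hkey k x hx
    rw [funext this]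
    have hp_eval : p.eval x = ∑ i ∈ s, ψ (v i) * (Lagrange.basis s v i).eval x := by
      rw [hp_def, Polynomial.eval_finset_sum]
      exact Finset.sum_congr rfl (fun i _ => by rw [Polynomial.eval_mul, Polynomial.eval_C])
    rw [hp_eval]
    exact tendsto_finset_sum _ (fun i _ => ((hlim (v i)).mul_const _))
  have hψx : ψ x = p.eval x := tendsto_nhds_unique h1 h2
  rw [← hψφ x ⟨by linarith [hx.1], by linarith [hx.2]⟩, hψx]

private lemma not_dense_implies_poly (U : Set ℝ) (hUopen : IsOpen U) (hUconn : U.OrdConnected)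
    (hUne : U.Nonempty) (K : Set ℝ) (hKcompact : IsCompact K)
    (φ : ℝ → ℝ) (hφ : ContinuousOn φ U)
    (hnd : ¬ Dense (↑(Submodule.span ℝ
        {h : C(K, ℝ) | ∃ a b : ℝ, (∀ t ∈ K, a * t + b ∈ U) ∧
          ∀ x : K, h x = φ (a * (x : ℝ) + b)}) : Set C(K, ℝ))) :
    ∃ p : Polynomial ℝ, ∀ t ∈ U, φ t = p.eval t := by
  haveI : CompactSpace K := isCompact_iff_compactSpace.mp hKcompact
  obtain ⟨L, hL0, hLW⟩ := exists_functional _ hnd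
  have hLS : ∀ h : C(K,ℝ), (∃ a b : ℝ, (∀ t ∈ K, a * t + b ∈ U) ∧
      ∀ x : K, h x = φ (a * (x : ℝ) + b)) → L h = 0 :=
    fun h hh => hLW h (Submodule.subset_span hh)
  obtain ⟨n₀, hn₀⟩ := exists_mono_ne K hKcompact L hL0
  obtain ⟨r, hr⟩ := hKcompact.isBounded.subset_closedBall 0
  set M : ℝ := max r 1 with hM_def
  have hM1 : 1 ≤ M := le_max_right _ _
  have hM : ∀ t ∈ K, |t| ≤ M := by
    intro t ht
    have := hr ht
    rw [Metric.mem_closedBall, Real.dist_eq, sub_zero] at this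
    exact this.trans (le_max_left _ _)
  have KC : ∀ c₁ d₁ : ℝ, c₁ < d₁ → Icc c₁ d₁ ⊆ U →
      ∃ p : Polynomial ℝ, ∀ x ∈ Ioo c₁ d₁, φ x = p.eval x :=
    fun c₁ d₁ hcd hIcc =>
      local_poly U hUopen K hKcompact φ hφ L hLS n₀ hn₀ M hM1 hM c₁ d₁ hcd hIcc
  obtain ⟨u₀, hu₀⟩ := hUne
  obtain ⟨r₀, hr₀pos, hball₀⟩ := Metric.isOpen_iff.mp hUopen u₀ hu₀
  set α := u₀ - r₀/2 with hα_def
  set β := u₀ + r₀/2 with hβ_def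
  have hαβ : α < β := by rw [hα_def, hβ_def]; linarith
  have hIccαβ : Icc α β ⊆ U := by
    intro x hx
    apply hball₀
    rw [Metric.mem_ball, Real.dist_eq]
    rw [abs_lt]
    constructor
    · have := hx.1; rw [hα_def] at this; linarith
    · have := hx.2; rw [hβ_def] at this; linarith
  obtain ⟨p₀, hp₀⟩ := KC α β hαβ hIccαβ
  refine ⟨p₀, fun y hy => ?_⟩
  obtain ⟨ry, hrypos, hbally⟩ := Metric.isOpen_iff.mp hUopen y hy
  set a := min α (y - ry/2) with ha_def
  set b := max β (y + ry/2) with hb_def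
  have haU : a ∈ U := by
    rcases le_total α (y - ry/2) with h | h
    · rw [ha_def, min_eq_left h]
      exact hIccαβ ⟨le_refl _, le_of_lt hαβ⟩
    · rw [ha_def, min_eq_right h]
      apply hbally
      rw [Metric.mem_ball, Real.dist_eq]
      rw [abs_of_nonpos (by linarith)]
      linarith
  have hbU : b ∈ U := by
    rcases le_total β (y + ry/2) with h | h
    · rw [hb_def, max_eq_right h]
      apply hbally
      rw [Metric.mem_ball, Real.dist_eq]
      rw [abs_of_nonneg (by linarith)]
      linarith
    · rw [hb_def, max_eq_left h]
      exact hIccαβ ⟨le_of_lt hαβ, le_refl _⟩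
  have hab : a < b := by
    have h1 : a ≤ α := min_le_left _ _
    have h2 : β ≤ b := le_max_left _ _
    linarith
  have hIccab : Icc a b ⊆ U := hUconn.out haU hbU
  obtain ⟨py, hpy⟩ := KC a b hab hIccab
  have hy_mem : y ∈ Ioo a b := by
    constructor
    · calc a ≤ y - ry/2 := min_le_right _ _
      _ < y := by linarith
    · calc y < y + ry/2 := by linarith
      _ ≤ b := le_max_right _ _
  have hpeq : py = p₀ := by
    apply Polynomial.eq_of_infinite_eval_eq
    apply Set.Infinite.mono (s := Ioo α β)
    · intro x hx
      have hx' : x ∈ Ioo a b := ⟨lt_of_le_of_lt (min_le_left _ _) hx.1,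
        lt_of_lt_of_le hx.2 (le_max_left _ _)⟩
      simp only [Set.mem_setOf_eq]
      rw [← hpy x hx', ← hp₀ x hx]
    · exact Set.infinite_coe_iff.mp (Set.Ioo.infinite hαβ)
  rw [← hpeq]
  exact hpy y hy_mem



/-- For a nonempty open interval `U`, an infinite compact set `K ⊆ ℝ`
and `φ` continuous on `U`, the span of `{φ ∘ g |_K : g affine, g(K) ⊆ U}` is dense in
`C(K)` if and only if `φ` does not coincide on `U` with a polynomial. -/
theorem stmt_1 (U : Set ℝ) (hUopen : IsOpen U) (hUconn : U.OrdConnected)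
    (hUne : U.Nonempty) (K : Set ℝ) (hKcompact : IsCompact K) (hKinf : K.Infinite)
    (φ : ℝ → ℝ) (hφ : ContinuousOn φ U) :
    Dense (↑(Submodule.span ℝ
        {h : C(K, ℝ) | ∃ a b : ℝ, (∀ t ∈ K, a * t + b ∈ U) ∧
          ∀ x : K, h x = φ (a * (x : ℝ) + b)}) : Set C(K, ℝ)) ↔
      ¬∃ p : Polynomial ℝ, ∀ t ∈ U, φ t = p.eval t := by

  constructor
  · rintro hd ⟨p, hp⟩
    exact dense_implies_not_poly U K hKcompact hKinf φ hd p hp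
  · intro hnp
    by_contra hnd
    exact hnp (not_dense_implies_poly U hUopen hUconn hUne K hKcompact φ hφ hnd)
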